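/- Let n be a natural number with n ≥ 1 and N = 2n. Let A be the unital associative ℝ-algebra presented by generators x_0, …, x_{N−1} subject to the relations: x_0² = −1, x_1² = −1, and x_i² = 1 for all i ≥ 2; x_{2k}·x_{2k+1} = −x_{2k+1}·x_{2k} for every 0 ≤ k < n; and x_i·x_j = x_j·x_i for every other pair i ≠ j (i.e., whenever {i,j} is not of the form {2k, 2k+1}). Then A is isomorphic, as an ℝ-algebra, to the matrix algebra M_{2^{n−1}}(ℍ) over the real quaternions ℍ. (This algebra A is the twisted group algebra 𝒜_ℝ(μ_1^{2n}) attached to the quadratic form q_1^{2n}(x) = x_1x_2 + ⋯ + x_{2n−1}x_{2n} + x_1 + x_2 over the field of two elements.) -/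

import Mathlib

/-- The relations presenting the twisted group algebra `𝒜_ℝ(μ₁^{2n})`:
generators `x_i` (`i : Fin (2n)`) with `x_0² = x_1² = -1`, `x_i² = 1` for `i ≥ 2`,
`x_{2k} x_{2k+1} = - x_{2k+1} x_{2k}` for `k < n`, and `x_i x_j = x_j x_i`
for every other pair `i ≠ j`. -/
inductive Rel11 (n : ℕ) : FreeAlgebra ℝ (Fin (2 * n)) → FreeAlgebra ℝ (Fin (2 * n)) → Prop
  | sq (i : Fin (2 * n)) :
      Rel11 n (FreeAlgebra.ι ℝ i * FreeAlgebra.ι ℝ i)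
        (if (i : ℕ) < 2 then -1 else 1)
  | anti (k : ℕ) (hk : k < n) :
      Rel11 n
        (FreeAlgebra.ι ℝ (⟨2 * k, by omega⟩ : Fin (2 * n)) *
          FreeAlgebra.ι ℝ (⟨2 * k + 1, by omega⟩ : Fin (2 * n)))
        (-(FreeAlgebra.ι ℝ (⟨2 * k + 1, by omega⟩ : Fin (2 * n)) *
          FreeAlgebra.ι ℝ (⟨2 * k, by omega⟩ : Fin (2 * n))))
  | comm (i j : Fin (2 * n)) (hij : i ≠ j)
      (h : ¬∃ k : ℕ, ((i : ℕ) = 2 * k ∧ (j : ℕ) = 2 * k + 1) ∨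
        ((i : ℕ) = 2 * k + 1 ∧ (j : ℕ) = 2 * k)) :
      Rel11 n (FreeAlgebra.ι ℝ i * FreeAlgebra.ι ℝ j) (FreeAlgebra.ι ℝ j * FreeAlgebra.ι ℝ i)

noncomputable section TwistedAux

abbrev Amu (n : ℕ) : Type := RingQuot (Rel11 n)

def Xg (n : ℕ) (i : Fin (2 * n)) : Amu n :=
  RingQuot.mkAlgHom ℝ (Rel11 n) (FreeAlgebra.ι ℝ i)

theorem Amu.hom_ext {n : ℕ} {B : Type} [Semiring B] [Algebra ℝ B]
    {f g : Amu n →ₐ[ℝ] B} (h : ∀ i, f (Xg n i) = g (Xg n i)) : f = g := by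
  have key : f.comp (RingQuot.mkAlgHom ℝ (Rel11 n)) = g.comp (RingQuot.mkAlgHom ℝ (Rel11 n)) := by
    apply FreeAlgebra.hom_ext
    funext i
    exact h i
  refine AlgHom.ext fun x => ?_
  obtain ⟨y, rfl⟩ := RingQuot.mkAlgHom_surjective ℝ (Rel11 n) x
  exact AlgHom.congr_fun key y

theorem Amu.induction {n : ℕ} {C : Amu n → Prop}
    (halg : ∀ r : ℝ, C (algebraMap ℝ (Amu n) r))
    (hgen : ∀ i, C (Xg n i))
    (hmul : ∀ a b, C a → C b → C (a * b))
    (hadd : ∀ a b, C a → C b → C (a + b)) : ∀ a, C a := by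
  intro a
  obtain ⟨y, rfl⟩ := RingQuot.mkAlgHom_surjective ℝ (Rel11 n) a
  induction y with
  | grade0 r => rw [AlgHom.commutes]; exact halg r
  | grade1 i => exact hgen i
  | mul a b ha hb => rw [map_mul]; exact hmul _ _ ha hb
  | add a b ha hb => rw [map_add]; exact hadd _ _ ha hb

theorem Xg_sq {n : ℕ} (i : Fin (2 * n)) :
    Xg n i * Xg n i = if (i : ℕ) < 2 then -1 else 1 := by
  have h := RingQuot.mkAlgHom_rel ℝ (Rel11.sq i)
  rw [map_mul] at h
  unfold Xg
  rw [h]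
  split_ifs <;> simp

theorem Xg_anti {n : ℕ} (k : ℕ) (hk : k < n) :
    Xg n ⟨2 * k, by omega⟩ * Xg n ⟨2 * k + 1, by omega⟩ =
      -(Xg n ⟨2 * k + 1, by omega⟩ * Xg n ⟨2 * k, by omega⟩) := by
  have h := RingQuot.mkAlgHom_rel ℝ (Rel11.anti k hk)
  rw [map_mul, map_neg, map_mul] at h
  exact h

theorem Xg_comm {n : ℕ} (i j : Fin (2 * n)) (hij : i ≠ j)
    (h : ¬∃ k : ℕ, ((i : ℕ) = 2 * k ∧ (j : ℕ) = 2 * k + 1) ∨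
        ((i : ℕ) = 2 * k + 1 ∧ (j : ℕ) = 2 * k)) :
    Xg n i * Xg n j = Xg n j * Xg n i := by
  have hr := RingQuot.mkAlgHom_rel ℝ (Rel11.comm i j hij h)
  rw [map_mul, map_mul] at hr
  exact hr

def inclF (n : ℕ) : Amu n →ₐ[ℝ] Amu (n + 1) :=
  RingQuot.liftAlgHom ℝ ⟨FreeAlgebra.lift ℝ (fun i => Xg (n + 1) ⟨i.val, by omega⟩), by
    intro x y hxy
    induction hxy with
    | sq i =>
        simp only [map_mul, FreeAlgebra.lift_ι_apply]
        rw [Xg_sq]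
        split_ifs with hc
        · rw [map_neg, map_one]
        · rw [map_one]
    | anti k hk =>
        simp only [map_mul, map_neg, FreeAlgebra.lift_ι_apply]
        exact Xg_anti k (by omega)
    | comm i j hij h =>
        simp only [map_mul, FreeAlgebra.lift_ι_apply]
        refine Xg_comm _ _ ?_ ?_
        · intro hc
          exact hij (Fin.ext (by simpa using congrArg Fin.val hc))
        · simpa using h⟩

theorem inclF_Xg (n : ℕ) (i : Fin (2 * n)) :
    inclF n (Xg n i) = Xg (n + 1) ⟨i.val, by omega⟩ := by
  unfold inclF
  show RingQuot.liftAlgHom ℝ _ (RingQuot.mkAlgHom ℝ (Rel11 n) (FreeAlgebra.ι ℝ i)) = _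
  rw [RingQuot.liftAlgHom_mkAlgHom_apply, FreeAlgebra.lift_ι_apply]

end TwistedAux
noncomputable section TwistedStep

variable (n : ℕ)

def uu : Amu (n + 1) := Xg (n + 1) ⟨2 * n, by omega⟩
def vv : Amu (n + 1) := Xg (n + 1) ⟨2 * n + 1, by omega⟩

variable {n}

theorem uu_sq (hn : 1 ≤ n) : uu n * uu n = 1 := by
  have h := Xg_sq (n := n + 1) ⟨2 * n, by omega⟩
  rwa [if_neg (by simp; omega)] at h

theorem vv_sq (hn : 1 ≤ n) : vv n * vv n = 1 := by
  have h := Xg_sq (n := n + 1) ⟨2 * n + 1, by omega⟩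
  rwa [if_neg (by simp; omega)] at h

theorem uu_vv : uu n * vv n = -(vv n * uu n) := Xg_anti n (by omega)

theorem vv_uu : vv n * uu n = -(uu n * vv n) := by
  rw [uu_vv, neg_neg]

theorem comm_uu (a : Amu n) : inclF n a * uu n = uu n * inclF n a := by
  induction a using Amu.induction with
  | halg r => rw [AlgHom.commutes]; exact Algebra.commutes r (uu n)
  | hgen i =>
      rw [inclF_Xg]
      exact Xg_comm _ _ (by simp [Fin.ext_iff]; omega)
        (by rintro ⟨k, ⟨h1, h2⟩ | ⟨h1, h2⟩⟩ <;> simp at h1 h2 <;> omega)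
  | hmul a b ha hb => rw [map_mul, mul_assoc, hb, ← mul_assoc, ha, mul_assoc]
  | hadd a b ha hb => rw [map_add, add_mul, ha, hb]; exact (mul_add _ _ _).symm

theorem comm_vv (a : Amu n) : inclF n a * vv n = vv n * inclF n a := by
  induction a using Amu.induction with
  | halg r => rw [AlgHom.commutes]; exact Algebra.commutes r (vv n)
  | hgen i =>
      rw [inclF_Xg]
      exact Xg_comm _ _ (by simp [Fin.ext_iff]; omega)
        (by rintro ⟨k, ⟨h1, h2⟩ | ⟨h1, h2⟩⟩ <;> simp at h1 h2 <;> omega)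
  | hmul a b ha hb => rw [map_mul, mul_assoc, hb, ← mul_assoc, ha, mul_assoc]
  | hadd a b ha hb => rw [map_add, add_mul, ha, hb]; exact (mul_add _ _ _).symm

variable (n)

def pp : Amu (n + 1) := (2⁻¹ : ℝ) • (1 + uu n)
def qq : Amu (n + 1) := (2⁻¹ : ℝ) • (1 - uu n)
def e01 : Amu (n + 1) := pp n * vv n
def e10 : Amu (n + 1) := vv n * pp n

variable {n}

theorem twoInvSmulAddSelf {A : Type} [Ring A] [Algebra ℝ A] (x : A) :
    (2⁻¹ : ℝ) • (x + x) = x := by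
  rw [← two_smul ℝ x, smul_smul]
  norm_num

theorem pp_add_qq : pp n + qq n = 1 := by
  rw [pp, qq, ← smul_add]
  have h : (1 + uu n) + (1 - uu n) = (1 : Amu (n + 1)) + 1 := by abel
  rw [h, twoInvSmulAddSelf]

theorem uu_pp (hn : 1 ≤ n) : uu n * pp n = pp n := by
  have h : uu n * (1 + uu n) = 1 + uu n := by
    rw [mul_add, mul_one, uu_sq hn]; abel
  rw [pp, mul_smul_comm, h]

theorem uu_qq (hn : 1 ≤ n) : uu n * qq n = -qq n := by
  have h : uu n * (1 - uu n) = -(1 - uu n) := by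
    rw [mul_sub, mul_one, uu_sq hn]; abel
  rw [qq, mul_smul_comm, h, smul_neg]

theorem vv_pp_eq_qq_vv : vv n * pp n = qq n * vv n := by
  have h : vv n * (1 + uu n) = (1 - uu n) * vv n := by
    rw [mul_add, mul_one, vv_uu, sub_mul, one_mul]; abel
  rw [pp, qq, mul_smul_comm, smul_mul_assoc, h]

theorem pp_vv_eq_vv_qq : pp n * vv n = vv n * qq n := by
  have h : (1 + uu n) * vv n = vv n * (1 - uu n) := by
    rw [add_mul, one_mul, mul_sub, mul_one, vv_uu]; abel
  rw [pp, qq, smul_mul_assoc, mul_smul_comm, h]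

-- action of uu on the matrix units
theorem uu_e00 (hn : 1 ≤ n) : uu n * pp n = pp n := uu_pp hn
theorem uu_e01 (hn : 1 ≤ n) : uu n * e01 n = e01 n := by
  rw [e01, ← mul_assoc, uu_pp hn]
theorem uu_e10 (hn : 1 ≤ n) : uu n * e10 n = -e10 n := by
  rw [e10, ← mul_assoc, uu_vv, neg_mul (vv n * uu n) (pp n), mul_assoc, uu_pp hn]
theorem uu_e11 (hn : 1 ≤ n) : uu n * qq n = -qq n := uu_qq hn

-- action of vv on the matrix units
theorem vv_e00 : vv n * pp n = e10 n := rfl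
theorem vv_e01 (hn : 1 ≤ n) : vv n * e01 n = qq n := by
  rw [e01, ← mul_assoc, vv_pp_eq_qq_vv, mul_assoc, vv_sq hn, mul_one]
theorem vv_e10 (hn : 1 ≤ n) : vv n * e10 n = pp n := by
  rw [e10, ← mul_assoc, vv_sq hn, one_mul]
theorem vv_e11 : vv n * qq n = e01 n := by
  rw [e01, pp_vv_eq_vv_qq]

end TwistedStep
noncomputable section TwistedPhi

-- `Neg`-lemmas specialised to `Amu` to work around `RingQuot` instance-unification issues
theorem amu_neg_mul {n : ℕ} (a b : Amu n) : -a * b = -(a * b) := neg_mul a b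
theorem amu_mul_neg {n : ℕ} (a b : Amu n) : a * -b = -(a * b) := mul_neg a b
theorem amu_neg_mul_neg {n : ℕ} (a b : Amu n) : -a * -b = a * b := neg_mul_neg a b
theorem amu_neg_neg {n : ℕ} (a : Amu n) : - -a = a := neg_neg a

/-- The scalar embedding of `Amu n` into 2×2 matrices, as an `ℝ`-algebra hom. -/
def scalarHom (n : ℕ) : Amu n →ₐ[ℝ] Matrix (Fin 2) (Fin 2) (Amu n) where
  toFun a := Matrix.diagonal (fun _ => a)
  map_one' := Matrix.diagonal_one
  map_mul' a b := (Matrix.diagonal_mul_diagonal _ _).symm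
  map_zero' := Matrix.diagonal_zero
  map_add' a b := by rw [Matrix.diagonal_add]
  commutes' r := by
    ext i j
    simp [Matrix.algebraMap_matrix_apply, Matrix.diagonal_apply]

theorem scalarHom_apply (n : ℕ) (a : Amu n) :
    scalarHom n a = Matrix.diagonal (fun _ => a) := rfl

def Em (n : ℕ) : Matrix (Fin 2) (Fin 2) (Amu n) := !![1, 0; 0, -1]
def Fm (n : ℕ) : Matrix (Fin 2) (Fin 2) (Amu n) := !![0, 1; 1, 0]

theorem Em_mul_Em {n : ℕ} : Em n * Em n = 1 := by
  ext i j
  fin_cases i <;> fin_cases j <;>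
    simp [Em, Matrix.mul_apply, Fin.sum_univ_two, Matrix.one_apply, amu_neg_mul_neg,
      amu_neg_mul, amu_mul_neg]

theorem Fm_mul_Fm {n : ℕ} : Fm n * Fm n = 1 := by
  ext i j
  fin_cases i <;> fin_cases j <;>
    simp [Fm, Matrix.mul_apply, Fin.sum_univ_two, Matrix.one_apply]

theorem Em_mul_Fm {n : ℕ} : Em n * Fm n = -(Fm n * Em n) := by
  ext i j
  fin_cases i <;> fin_cases j <;>
    simp [Em, Fm, Matrix.mul_apply, Fin.sum_univ_two, amu_neg_mul_neg, amu_neg_mul, amu_mul_neg]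

theorem scalar_comm_Em {n : ℕ} (a : Amu n) :
    scalarHom n a * Em n = Em n * scalarHom n a := by
  ext i j
  fin_cases i <;> fin_cases j <;>
    simp [Em, scalarHom_apply, Matrix.mul_apply, Fin.sum_univ_two, Matrix.diagonal_apply,
      amu_neg_mul_neg, amu_neg_mul, amu_mul_neg]

theorem scalar_comm_Fm {n : ℕ} (a : Amu n) :
    scalarHom n a * Fm n = Fm n * scalarHom n a := by
  ext i j
  fin_cases i <;> fin_cases j <;>
    simp [Fm, scalarHom_apply, Matrix.mul_apply, Fin.sum_univ_two, Matrix.diagonal_apply]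

def gmap (n : ℕ) : Fin (2 * (n + 1)) → Matrix (Fin 2) (Fin 2) (Amu n) :=
  fun i =>
    if h : (i : ℕ) < 2 * n then scalarHom n (Xg n ⟨i, h⟩)
    else if (i : ℕ) = 2 * n then Em n else Fm n

theorem gmap_lt {n : ℕ} (i : Fin (2 * (n + 1))) (h : (i : ℕ) < 2 * n) :
    gmap n i = scalarHom n (Xg n ⟨i, h⟩) := by
  rw [gmap, dif_pos h]

theorem gmap_em {n : ℕ} (i : Fin (2 * (n + 1))) (h : (i : ℕ) = 2 * n) :
    gmap n i = Em n := by
  rw [gmap, dif_neg (by omega), if_pos h]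

theorem gmap_fm {n : ℕ} (i : Fin (2 * (n + 1))) (h : (i : ℕ) = 2 * n + 1) :
    gmap n i = Fm n := by
  rw [gmap, dif_neg (by omega), if_neg (by omega)]

/-- The main algebra homomorphism `Amu (n+1) → M₂(Amu n)`. -/
def phi (n : ℕ) (hn : 1 ≤ n) : Amu (n + 1) →ₐ[ℝ] Matrix (Fin 2) (Fin 2) (Amu n) :=
  RingQuot.liftAlgHom ℝ ⟨FreeAlgebra.lift ℝ (gmap n), by
    intro x y hxy
    induction hxy with
    | sq i =>
        simp only [map_mul, FreeAlgebra.lift_ι_apply]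
        rcases lt_or_ge (i : ℕ) (2 * n) with h1 | h1
        · rw [gmap_lt i h1, ← map_mul, Xg_sq]
          by_cases h2 : (i : ℕ) < 2
          · rw [if_pos h2, if_pos h2, map_neg, map_neg, map_one, map_one]
          · rw [if_neg h2, if_neg h2, map_one, map_one]
        · have h2 : ¬ ((i : ℕ) < 2) := by omega
          rw [if_neg h2, map_one]
          rcases Nat.lt_or_ge (i : ℕ) (2 * n + 1) with h3 | h3
          · rw [gmap_em i (by omega)]; exact Em_mul_Em
          · rw [gmap_fm i (by omega)]; exact Fm_mul_Fm
    | anti k hk =>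
        simp only [map_mul, map_neg, FreeAlgebra.lift_ι_apply]
        rcases Nat.lt_or_ge k n with h1 | h1
        · rw [gmap_lt _ (show ((⟨2*k, by omega⟩ : Fin (2*(n+1))) : ℕ) < 2*n by simp; omega),
            gmap_lt _ (show ((⟨2*k+1, by omega⟩ : Fin (2*(n+1))) : ℕ) < 2*n by simp; omega),
            ← map_mul, ← map_mul, Xg_anti k h1, map_neg]
        · have hk' : k = n := by omega
          subst hk'
          rw [gmap_em _ (by simp), gmap_fm _ (by simp)]
          exact Em_mul_Fm
    | comm i j hij h =>
        simp only [map_mul, FreeAlgebra.lift_ι_apply]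
        have hvij : (i : ℕ) ≠ (j : ℕ) := fun hc => hij (Fin.ext hc)
        rcases lt_or_ge (i : ℕ) (2 * n) with h1 | h1 <;>
          rcases lt_or_ge (j : ℕ) (2 * n) with h2 | h2
        · rw [gmap_lt i h1, gmap_lt j h2, ← map_mul, ← map_mul]
          congr 1
          refine Xg_comm _ _ (by simp [Fin.ext_iff]; omega) (by simpa using h)
        · rcases Nat.lt_or_ge (j : ℕ) (2 * n + 1) with h3 | h3
          · rw [gmap_lt i h1, gmap_em j (by omega)]; exact scalar_comm_Em _
          · rw [gmap_lt i h1, gmap_fm j (by omega)]; exact scalar_comm_Fm _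
        · rcases Nat.lt_or_ge (i : ℕ) (2 * n + 1) with h3 | h3
          · rw [gmap_lt j h2, gmap_em i (by omega)]; exact (scalar_comm_Em _).symm
          · rw [gmap_lt j h2, gmap_fm i (by omega)]; exact (scalar_comm_Fm _).symm
        · exfalso
          have hi2 : (i : ℕ) < 2 * (n + 1) := i.isLt
          have hj2 : (j : ℕ) < 2 * (n + 1) := j.isLt
          exact h ⟨n, by omega⟩⟩

theorem phi_Xg {n : ℕ} (hn : 1 ≤ n) (i : Fin (2 * (n + 1))) :
    phi n hn (Xg (n + 1) i) = gmap n i := by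
  unfold phi Xg
  rw [RingQuot.liftAlgHom_mkAlgHom_apply, FreeAlgebra.lift_ι_apply]

theorem phi_uu {n : ℕ} (hn : 1 ≤ n) : phi n hn (uu n) = Em n := by
  rw [uu, phi_Xg hn, gmap_em _ (by simp)]

theorem phi_vv {n : ℕ} (hn : 1 ≤ n) : phi n hn (vv n) = Fm n := by
  rw [vv, phi_Xg hn, gmap_fm _ (by simp)]

theorem phi_incl {n : ℕ} (hn : 1 ≤ n) (a : Amu n) :
    phi n hn (inclF n a) = scalarHom n a := by
  have key : (phi n hn).comp (inclF n) = scalarHom n := by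
    apply Amu.hom_ext
    intro i
    rw [AlgHom.comp_apply, inclF_Xg, phi_Xg hn, gmap_lt _ (by simp)]
  exact AlgHom.congr_fun key a

end TwistedPhi
noncomputable section TwistedInverse

theorem amu_mul_add {n : ℕ} (a b c : Amu n) : a * (b + c) = a * b + a * c := mul_add a b c

theorem twoInvSmulOnePair {A : Type} [Ring A] [Algebra ℝ A] :
    (2⁻¹ : ℝ) • (1 : A) + (2⁻¹ : ℝ) • (1 : A) = 1 := by
  rw [← smul_add, twoInvSmulAddSelf]

theorem phi_pp {n : ℕ} (hn : 1 ≤ n) : phi n hn (pp n) = !![1, 0; 0, 0] := by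
  rw [pp, map_smul, map_add, map_one, phi_uu hn]
  ext i j
  fin_cases i <;> fin_cases j <;>
    simp [Em, Matrix.one_apply, twoInvSmulAddSelf, twoInvSmulOnePair]

theorem phi_qq {n : ℕ} (hn : 1 ≤ n) : phi n hn (qq n) = !![0, 0; 0, 1] := by
  rw [qq, map_smul, map_sub, map_one, phi_uu hn]
  ext i j
  fin_cases i <;> fin_cases j <;>
    simp [Em, Matrix.one_apply, sub_neg_eq_add, twoInvSmulAddSelf, twoInvSmulOnePair]

theorem phi_e01 {n : ℕ} (hn : 1 ≤ n) : phi n hn (e01 n) = !![0, 1; 0, 0] := by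
  rw [e01, map_mul, phi_pp hn, phi_vv hn]
  ext i j
  fin_cases i <;> fin_cases j <;>
    simp [Fm, Matrix.mul_apply, Fin.sum_univ_two]

theorem phi_e10 {n : ℕ} (hn : 1 ≤ n) : phi n hn (e10 n) = !![0, 0; 1, 0] := by
  rw [e10, map_mul, phi_pp hn, phi_vv hn]
  ext i j
  fin_cases i <;> fin_cases j <;>
    simp [Fm, Matrix.mul_apply, Fin.sum_univ_two]

/-- The (linear) inverse of `phi`. -/
def LL (n : ℕ) (M : Matrix (Fin 2) (Fin 2) (Amu n)) : Amu (n + 1) :=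
  inclF n (M 0 0) * pp n + inclF n (M 0 1) * e01 n +
    inclF n (M 1 0) * e10 n + inclF n (M 1 1) * qq n

theorem phi_LL {n : ℕ} (hn : 1 ≤ n) (M : Matrix (Fin 2) (Fin 2) (Amu n)) :
    phi n hn (LL n M) = M := by
  rw [LL, map_add, map_add, map_add, map_mul, map_mul, map_mul, map_mul,
    phi_pp hn, phi_qq hn, phi_e01 hn, phi_e10 hn, phi_incl hn, phi_incl hn,
    phi_incl hn, phi_incl hn]
  ext i j
  fin_cases i <;> fin_cases j <;>
    simp [scalarHom_apply, Matrix.mul_apply, Fin.sum_univ_two, Matrix.diagonal_apply]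

theorem LL_one {n : ℕ} : LL n 1 = 1 := by
  have h00 : (1 : Matrix (Fin 2) (Fin 2) (Amu n)) 0 0 = 1 := rfl
  have h01 : (1 : Matrix (Fin 2) (Fin 2) (Amu n)) 0 1 = 0 := rfl
  have h10 : (1 : Matrix (Fin 2) (Fin 2) (Amu n)) 1 0 = 0 := rfl
  have h11 : (1 : Matrix (Fin 2) (Fin 2) (Amu n)) 1 1 = 1 := rfl
  rw [LL, h00, h01, h10, h11, map_one, map_zero, one_mul, one_mul, zero_mul, zero_mul,
    add_zero, add_zero]
  exact pp_add_qq

theorem LL_add {n : ℕ} (M N : Matrix (Fin 2) (Fin 2) (Amu n)) :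
    LL n (M + N) = LL n M + LL n N := by
  have h : ∀ i j, (M + N) i j = M i j + N i j := fun i j => rfl
  rw [LL, h, h, h, h, map_add, map_add, map_add, map_add, add_mul, add_mul, add_mul, add_mul, LL, LL]
  abel

theorem LL_smul {n : ℕ} (r : ℝ) (M : Matrix (Fin 2) (Fin 2) (Amu n)) :
    LL n (r • M) = r • LL n M := by
  have h : ∀ i j, (r • M) i j = r • M i j := fun i j => rfl
  rw [LL, h, h, h, h, map_smul, map_smul, map_smul, map_smul,
    smul_mul_assoc, smul_mul_assoc, smul_mul_assoc, smul_mul_assoc, LL,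
    smul_add, smul_add, smul_add]

theorem LL_scalar_mul {n : ℕ} (a : Amu n) (M : Matrix (Fin 2) (Fin 2) (Amu n)) :
    LL n (scalarHom n a * M) = inclF n a * LL n M := by
  have h : ∀ i j, (scalarHom n a * M) i j = a * M i j := by
    intro i j
    rw [scalarHom_apply, Matrix.diagonal_mul]
  rw [LL, h, h, h, h, map_mul, map_mul, map_mul, map_mul, LL, amu_mul_add, amu_mul_add, amu_mul_add,
    mul_assoc, mul_assoc, mul_assoc, mul_assoc]

theorem uu_mul_incl_mul {n : ℕ} (x : Amu n) (e : Amu (n + 1)) :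
    uu n * (inclF n x * e) = inclF n x * (uu n * e) := by
  rw [← mul_assoc, ← comm_uu, mul_assoc]

theorem vv_mul_incl_mul {n : ℕ} (x : Amu n) (e : Amu (n + 1)) :
    vv n * (inclF n x * e) = inclF n x * (vv n * e) := by
  rw [← mul_assoc, ← comm_vv, mul_assoc]

theorem LL_Em_mul {n : ℕ} (hn : 1 ≤ n) (M : Matrix (Fin 2) (Fin 2) (Amu n)) :
    LL n (Em n * M) = uu n * LL n M := by
  have h0 : ∀ j, (Em n * M) 0 j = M 0 j := by
    intro j; simp [Em, Matrix.mul_apply, Fin.sum_univ_two]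
  have h1 : ∀ j, (Em n * M) 1 j = -(M 1 j) := by
    intro j; simp [Em, Matrix.mul_apply, Fin.sum_univ_two, amu_neg_mul]
  rw [LL, h0, h0, h1, h1, map_neg, map_neg,
    amu_neg_mul (n := n + 1) (inclF n (M 1 0)) (e10 n),
    amu_neg_mul (n := n + 1) (inclF n (M 1 1)) (qq n),
    LL, amu_mul_add, amu_mul_add, amu_mul_add,
    uu_mul_incl_mul, uu_mul_incl_mul, uu_mul_incl_mul, uu_mul_incl_mul,
    uu_pp hn, uu_e01 hn, uu_e10 hn, uu_e11 hn,
    amu_mul_neg (n := n + 1) (inclF n (M 1 0)) (e10 n),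
    amu_mul_neg (n := n + 1) (inclF n (M 1 1)) (qq n)]

theorem LL_Fm_mul {n : ℕ} (hn : 1 ≤ n) (M : Matrix (Fin 2) (Fin 2) (Amu n)) :
    LL n (Fm n * M) = vv n * LL n M := by
  have h0 : ∀ j, (Fm n * M) 0 j = M 1 j := by
    intro j; simp [Fm, Matrix.mul_apply, Fin.sum_univ_two]
  have h1 : ∀ j, (Fm n * M) 1 j = M 0 j := by
    intro j; simp [Fm, Matrix.mul_apply, Fin.sum_univ_two]
  rw [LL, h0, h0, h1, h1, LL, amu_mul_add, amu_mul_add, amu_mul_add,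
    vv_mul_incl_mul, vv_mul_incl_mul, vv_mul_incl_mul, vv_mul_incl_mul,
    vv_e00, vv_e01 hn, vv_e10 hn, vv_e11]
  abel

theorem LL_phi_mul {n : ℕ} (hn : 1 ≤ n) :
    ∀ a : Amu (n + 1), ∀ M : Matrix (Fin 2) (Fin 2) (Amu n),
      LL n (phi n hn a * M) = a * LL n M := by
  intro a
  induction a using Amu.induction with
  | halg r =>
      intro M
      rw [AlgHom.commutes, ← Algebra.smul_def, LL_smul, Algebra.smul_def]
  | hgen i =>
      intro M
      rcases lt_or_ge (i : ℕ) (2 * n) with h1 | h1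
      · rw [phi_Xg hn, gmap_lt i h1, LL_scalar_mul]
        congr 1
        rw [inclF_Xg]
      · rcases Nat.lt_or_ge (i : ℕ) (2 * n + 1) with h3 | h3
        · have hi : i = ⟨2 * n, by omega⟩ := Fin.ext (show (i : ℕ) = 2 * n by omega)
          rw [hi, phi_Xg hn, gmap_em _ (by simp), LL_Em_mul hn, uu]
        · have hi : i = ⟨2 * n + 1, by omega⟩ :=
            Fin.ext (show (i : ℕ) = 2 * n + 1 by have := i.isLt; omega)
          rw [hi, phi_Xg hn, gmap_fm _ (by simp), LL_Fm_mul hn, vv]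
  | hmul a b ha hb =>
      intro M
      rw [map_mul, mul_assoc, ha, hb, ← mul_assoc]
  | hadd a b ha hb =>
      intro M
      rw [map_add, add_mul, LL_add, ha, hb, add_mul]

theorem LL_phi {n : ℕ} (hn : 1 ≤ n) (a : Amu (n + 1)) : LL n (phi n hn a) = a := by
  have h := LL_phi_mul hn a 1
  rwa [mul_one, LL_one, mul_one] at h

/-- The inductive step equivalence. -/
def stepEquiv (n : ℕ) (hn : 1 ≤ n) :
    Amu (n + 1) ≃ₐ[ℝ] Matrix (Fin 2) (Fin 2) (Amu n) :=
  AlgEquiv.ofBijective (phi n hn)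
    ⟨fun a b h => by
        have := congrArg (LL n) h
        rwa [LL_phi hn, LL_phi hn] at this,
      fun M => ⟨LL n M, phi_LL hn M⟩⟩

end TwistedInverse
noncomputable section TwistedBase

open scoped Quaternion

/-- The quaternionic basis inside `Amu 1`. -/
def baseBasis : QuaternionAlgebra.Basis (Amu 1) (-1 : ℝ) (0 : ℝ) (-1 : ℝ) where
  i := Xg 1 ⟨0, by omega⟩
  j := Xg 1 ⟨1, by omega⟩
  k := Xg 1 ⟨0, by omega⟩ * Xg 1 ⟨1, by omega⟩
  i_mul_i := by
    have h := Xg_sq (n := 1) ⟨0, by omega⟩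
    rw [if_pos (by norm_num)] at h
    rw [h, zero_smul, add_zero]; exact (neg_one_smul ℝ (1 : Amu 1)).symm
  j_mul_j := by
    have h := Xg_sq (n := 1) ⟨1, by omega⟩
    rw [if_pos (by norm_num)] at h
    rw [h]; exact (neg_one_smul ℝ (1 : Amu 1)).symm
  i_mul_j := rfl
  j_mul_i := by
    rw [zero_smul, zero_sub]
    have h := Xg_anti (n := 1) 0 (by norm_num)
    have h' := congrArg Neg.neg h
    rw [amu_neg_neg] at h'
    exact h'.symm

/-- The map `ℍ → Amu 1`. -/
def backHom : Quaternion ℝ →ₐ[ℝ] Amu 1 := baseBasis.liftHom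

abbrev qBasis : QuaternionAlgebra.Basis (Quaternion ℝ) (-1 : ℝ) (0 : ℝ) (-1 : ℝ) :=
  QuaternionAlgebra.Basis.self ℝ

/-- The map `Amu 1 → ℍ`. -/
def fwdHom : Amu 1 →ₐ[ℝ] Quaternion ℝ :=
  RingQuot.liftAlgHom ℝ ⟨FreeAlgebra.lift ℝ
      (fun i : Fin (2 * 1) =>
        if (i : ℕ) = 0 then qBasis.i
        else qBasis.j), by
    set bi := qBasis with hbi
    intro x y hxy
    induction hxy with
    | sq i =>
        simp only [map_mul, FreeAlgebra.lift_ι_apply]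
        rw [if_pos (show (i : ℕ) < 2 from i.isLt), map_neg, map_one]
        by_cases h0 : (i : ℕ) = 0
        · rw [if_pos h0, bi.i_mul_i, neg_smul, one_smul, zero_smul, add_zero]
        · rw [if_neg h0, bi.j_mul_j, neg_smul, one_smul]
    | anti k hk =>
        have hk0 : k = 0 := by omega
        subst hk0
        simp only [map_mul, map_neg, FreeAlgebra.lift_ι_apply]
        norm_num
    | comm i j hij h =>
        exfalso
        have hi : (i : ℕ) < 2 := i.isLt
        have hj : (j : ℕ) < 2 := j.isLt
        have hne : (i : ℕ) ≠ (j : ℕ) := fun hc => hij (Fin.ext hc)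
        exact h ⟨0, by omega⟩⟩

theorem fwd_Xg0 : fwdHom (Xg 1 ⟨0, by omega⟩) =
    qBasis.i := by
  unfold fwdHom Xg
  rw [RingQuot.liftAlgHom_mkAlgHom_apply, FreeAlgebra.lift_ι_apply, if_pos rfl]

theorem fwd_Xg1 : fwdHom (Xg 1 ⟨1, by omega⟩) =
    qBasis.j := by
  unfold fwdHom Xg
  rw [RingQuot.liftAlgHom_mkAlgHom_apply, FreeAlgebra.lift_ι_apply, if_neg (by norm_num)]

theorem back_i : backHom qBasis.i =
    Xg 1 ⟨0, by omega⟩ := by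
  have h2 := congrArg QuaternionAlgebra.Basis.i (QuaternionAlgebra.lift.left_inv baseBasis)
  exact h2

theorem back_j : backHom qBasis.j =
    Xg 1 ⟨1, by omega⟩ := by
  have h2 := congrArg QuaternionAlgebra.Basis.j (QuaternionAlgebra.lift.left_inv baseBasis)
  exact h2

/-- The base-case equivalence. -/
def baseEquiv : Amu 1 ≃ₐ[ℝ] Quaternion ℝ := by
  refine AlgEquiv.ofAlgHom fwdHom backHom ?_ ?_
  · apply QuaternionAlgebra.hom_ext
    · exact (congrArg fwdHom back_i).trans fwd_Xg0
    · exact (congrArg fwdHom back_j).trans fwd_Xg1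
  · apply Amu.hom_ext
    intro i
    rw [AlgHom.comp_apply, AlgHom.id_apply]
    have hv : (i : ℕ) = 0 ∨ (i : ℕ) = 1 := by have := i.isLt; omega
    have hi : i = ⟨0, by omega⟩ ∨ i = ⟨1, by omega⟩ := by
      rcases hv with h | h
      · exact Or.inl (Fin.ext h)
      · exact Or.inr (Fin.ext h)
    rcases hi with rfl | rfl
    · exact (congrArg backHom fwd_Xg0).trans back_i
    · exact (congrArg backHom fwd_Xg1).trans back_j

/-- Any `ℝ`-algebra is isomorphic to its `1×1` matrices. -/
def matrixFinOne (A : Type) [Ring A] [Algebra ℝ A] : A ≃ₐ[ℝ] Matrix (Fin 1) (Fin 1) A := by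
  refine AlgEquiv.ofAlgHom
    { toFun := fun a => Matrix.diagonal (fun _ => a)
      map_one' := Matrix.diagonal_one
      map_mul' := fun a b => (Matrix.diagonal_mul_diagonal _ _).symm
      map_zero' := Matrix.diagonal_zero
      map_add' := fun a b => by rw [Matrix.diagonal_add]
      commutes' := fun r => by
        ext i j
        simp [Matrix.algebraMap_matrix_apply, Matrix.diagonal_apply] }
    { toFun := fun M => M 0 0
      map_one' := rfl
      map_mul' := fun M N => by
        show (M * N) 0 0 = M 0 0 * N 0 0
        rw [Matrix.mul_apply, Fin.sum_univ_one]
      map_zero' := rfl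
      map_add' := fun M N => rfl
      commutes' := fun r => by simp [Matrix.algebraMap_matrix_apply] }
    ?_ ?_
  · refine AlgHom.ext fun M => ?_
    ext i j
    have hi : i = 0 := Subsingleton.elim i 0
    have hj : j = 0 := Subsingleton.elim j 0
    subst hi; subst hj
    simp [Matrix.diagonal_apply]
    rfl
  · exact AlgHom.ext fun a => rfl

end TwistedBase

theorem twisted_mu1_even_iso_matrix_quaternion (n : ℕ) (hn : 1 ≤ n) :
    Nonempty (RingQuot (Rel11 n) ≃ₐ[ℝ]
      Matrix (Fin (2 ^ (n - 1))) (Fin (2 ^ (n - 1))) (Quaternion ℝ)) := by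
  induction n with
  | zero => omega
  | succ m ih =>
      rcases Nat.eq_zero_or_pos m with rfl | hm
      · exact ⟨baseEquiv.trans (matrixFinOne (Quaternion ℝ))⟩
      · obtain ⟨em⟩ := ih hm
        have hcard : 2 * 2 ^ (m - 1) = 2 ^ (m + 1 - 1) := by
          have h1 : m - 1 + 1 = m := by omega
          calc 2 * 2 ^ (m - 1) = 2 ^ (m - 1) * 2 := mul_comm _ _
            _ = 2 ^ (m - 1 + 1) := (pow_succ 2 (m - 1)).symm
            _ = 2 ^ (m + 1 - 1) := by rw [h1, Nat.add_sub_cancel]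
        refine ⟨((stepEquiv m hm).trans em.mapMatrix).trans ?_⟩
        refine (Matrix.compAlgEquiv (Fin 2) (Fin (2 ^ (m - 1))) (Quaternion ℝ) ℝ).trans ?_
        exact Matrix.reindexAlgEquiv ℝ (Quaternion ℝ)
          ((finProdFinEquiv).trans (finCongr hcard))
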